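/- Let (ℒ, ℒ̄) be a Toda Lax pair in the standard gauge and φ : ℤ → ℂ such that the constraint of type B, (T − T†)ℒ̄ = ℒ†(T − T†), holds. Then for every integer k ≥ 1 the following matrix identity holds: (T − T†)B_k − B̄_k†(T − T†) = ((ℒ̄†)^k)_{1} T† − T† (ℒ^k)_{1} + Φ̄_k T − T Φ_k. -/
import Mathlib


/-- Pseudo-difference operators modeled as ℤ×ℤ matrices over ℂ. -/
abbrev PDO := ℤ → ℤ → ℂ

/-- Entrywise matrix product `(MN)(n,m) = Σ_k M(n,k) N(k,m)` (a `tsum`;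
it reduces to a finite sum whenever the supports make it finitely supported). -/
noncomputable def pmul (M N : PDO) : PDO := fun n m => ∑' k : ℤ, M n k * N k m

/-- The adjoint: `(M†)(n,m) = M(m,n)`. -/
def padj (M : PDO) : PDO := fun n m => M m n

/-- Matrix powers, with `ppow M 0` the identity matrix. -/
noncomputable def ppow (M : PDO) : ℕ → PDO
  | 0 => fun n m => if n = m then 1 else 0
  | k + 1 => pmul (ppow M k) M

/-- `(M)_{>0}`: the strictly upper-triangular (positive-diagonal) part. -/
def pplus (M : PDO) : PDO := fun n m => if n < m then M n m else 0

/-- `(M)_{<0}`: the strictly lower-triangular (negative-diagonal) part. -/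
def pminus (M : PDO) : PDO := fun n m => if m < n then M n m else 0

/-- `(M)_0`: the diagonal part. -/
def pzero (M : PDO) : PDO := fun n m => if n = m then M n m else 0

/-- `(M)_j`: the j-th diagonal part, with `(n, n+j)` entry `M(n, n+j)`. -/
def pdiag (j : ℤ) (M : PDO) : PDO := fun n m => if m = n + j then M n m else 0

/-- The shift matrix Λ: entries 1 iff `m = n+1`. -/
def shiftΛ : PDO := fun n m => if m = n + 1 then 1 else 0

/-- The inverse shift matrix Λ⁻¹ (transpose of Λ): entries 1 iff `m = n-1`. -/
def shiftΛinv : PDO := fun n m => if m = n - 1 then 1 else 0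

/-- Matrix `T` with entries `T(n,m) = e^{-φ(n)}` if `m = n+1`, else 0. -/
noncomputable def Tmat (φ : ℤ → ℂ) : PDO :=
  fun n m => if m = n + 1 then Complex.exp (-(φ n)) else 0

/-- A Toda Lax pair in the standard gauge: `L` is of lower type with
`L(n,m) = 0` for `m > n+1` and `L(n,n+1) = 1`; `L̄` is of upper type with
`L̄(n,m) = 0` for `m < n-1`. -/
def IsStandardPair (L Lb : PDO) : Prop :=
  (∀ n m : ℤ, n + 1 < m → L n m = 0) ∧ (∀ n : ℤ, L n (n + 1) = 1) ∧
  (∀ n m : ℤ, m < n - 1 → Lb n m = 0)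

/-- `B_k = (L^k)_{>0}`. -/
noncomputable def Bop (L : PDO) (k : ℕ) : PDO := pplus (ppow L k)

/-- `Φ_k = (L^k)_0`. -/
noncomputable def Phiop (L : PDO) (k : ℕ) : PDO := pzero (ppow L k)

/-- `B̄_k = (L̄^k)_{<0}`. -/
noncomputable def Bbarop (Lb : PDO) (k : ℕ) : PDO := pminus (ppow Lb k)

/-- `Φ̄_k = (L̄^k)_0`. -/
noncomputable def Phibarop (Lb : PDO) (k : ℕ) : PDO := pzero (ppow Lb k)

section Aux

private lemma tsum_zero_of (f : ℤ → ℂ) (h : ∀ x, f x = 0) : ∑' x, f x = 0 := by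
  rw [tsum_congr h]; exact tsum_zero

/-- Triple product expansion, right-associated. -/
private lemma pmul_right_expand (M N P : PDO) (n m : ℤ) (s t : Finset ℤ)
    (h : ∀ j i, M n j ≠ 0 → N j i ≠ 0 → P i m ≠ 0 → j ∈ s ∧ i ∈ t) :
    pmul M (pmul N P) n m = ∑ j ∈ s, ∑ i ∈ t, M n j * (N j i * P i m) := by
  have hj0 : ∀ j ∉ s, M n j * pmul N P j m = 0 := by
    intro j hj
    by_cases hM : M n j = 0
    · simp [hM]
    · have hz : ∀ i, N j i * P i m = 0 := by
        intro i
        by_cases hN : N j i = 0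
        · simp [hN]
        by_cases hP : P i m = 0
        · simp [hP]
        exact absurd ((h j i hM hN hP).1) hj
      have : pmul N P j m = 0 := tsum_zero_of _ hz
      simp [this]
  rw [pmul, tsum_eq_sum hj0]
  refine Finset.sum_congr rfl fun j hj => ?_
  by_cases hM : M n j = 0
  · simp [hM]
  have hi0 : ∀ i ∉ t, N j i * P i m = 0 := by
    intro i hi
    by_cases hN : N j i = 0
    · simp [hN]
    by_cases hP : P i m = 0
    · simp [hP]
    exact absurd ((h j i hM hN hP).2) hi
  rw [pmul, tsum_eq_sum hi0, Finset.mul_sum]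

/-- Triple product expansion, left-associated. -/
private lemma pmul_left_expand (M N P : PDO) (n m : ℤ) (s t : Finset ℤ)
    (h : ∀ j i, M n j ≠ 0 → N j i ≠ 0 → P i m ≠ 0 → j ∈ s ∧ i ∈ t) :
    pmul (pmul M N) P n m = ∑ j ∈ s, ∑ i ∈ t, M n j * (N j i * P i m) := by
  have hi0 : ∀ i ∉ t, pmul M N n i * P i m = 0 := by
    intro i hi
    by_cases hP : P i m = 0
    · simp [hP]
    · have hz : ∀ j, M n j * N j i = 0 := by
        intro j
        by_cases hM : M n j = 0
        · simp [hM]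
        by_cases hN : N j i = 0
        · simp [hN]
        exact absurd ((h j i hM hN hP).2) hi
      have : pmul M N n i = 0 := tsum_zero_of _ hz
      simp [this]
  rw [pmul, tsum_eq_sum hi0, Finset.sum_comm]
  refine Finset.sum_congr rfl fun i hi => ?_
  by_cases hP : P i m = 0
  · simp [hP]
  have hj0 : ∀ j ∉ s, M n j * N j i = 0 := by
    intro j hj
    by_cases hM : M n j = 0
    · simp [hM]
    by_cases hN : N j i = 0
    · simp [hN]
    exact absurd ((h j i hM hN hP).1) hj
  rw [pmul, tsum_eq_sum hj0, Finset.sum_mul]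
  exact Finset.sum_congr rfl fun j _ => by ring

private lemma pmul_assoc_of (M N P : PDO) (n m : ℤ) (s t : Finset ℤ)
    (h : ∀ j i, M n j ≠ 0 → N j i ≠ 0 → P i m ≠ 0 → j ∈ s ∧ i ∈ t) :
    pmul M (pmul N P) n m = pmul (pmul M N) P n m :=
  (pmul_right_expand M N P n m s t h).trans (pmul_left_expand M N P n m s t h).symm

private lemma pmul_pow_zero (X M : PDO) : pmul M (ppow X 0) = M := by
  funext n m
  simp only [pmul, ppow]
  rw [tsum_eq_single m (fun j hj => by rw [if_neg hj, mul_zero])]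
  rw [if_pos rfl, mul_one]

private lemma pow_zero_pmul (X M : PDO) : pmul (ppow X 0) M = M := by
  funext n m
  simp only [pmul, ppow]
  rw [tsum_eq_single n (fun j hj => by rw [if_neg (fun h => hj h.symm), zero_mul])]
  rw [if_pos rfl, one_mul]

private lemma A_entry (φ : ℤ → ℂ) (n j : ℤ) :
    (Tmat φ - padj (Tmat φ)) n j
      = (if j = n + 1 then Complex.exp (-(φ n)) else 0)
        - (if j = n - 1 then Complex.exp (-(φ (n - 1))) else 0) := by
  simp only [Pi.sub_apply, Tmat, padj]
  rcases eq_or_ne j (n + 1) with h1 | h1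
  · subst h1
    rw [if_neg (by omega : ¬ n = n + 1 + 1), if_neg (by omega : ¬ (n + 1 : ℤ) = n - 1)]
  · rcases eq_or_ne j (n - 1) with h2 | h2
    · subst h2
      rw [if_neg h1, if_pos (by omega : n = n - 1 + 1), if_pos rfl]
    · rw [if_neg h1, if_neg (by omega : ¬ n = j + 1), if_neg h2]

private lemma A_support (φ : ℤ → ℂ) (n j : ℤ)
    (h : (Tmat φ - padj (Tmat φ)) n j ≠ 0) : j = n - 1 ∨ j = n + 1 := by
  by_contra hc
  push_neg at hc
  rw [A_entry, if_neg hc.2, if_neg hc.1, sub_zero] at h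
  exact h rfl

private lemma mulA_left (φ : ℤ → ℂ) (M : PDO) (n m : ℤ) :
    pmul (Tmat φ - padj (Tmat φ)) M n m
      = Complex.exp (-(φ n)) * M (n + 1) m
        - Complex.exp (-(φ (n - 1))) * M (n - 1) m := by
  have hs : ∀ j ∉ ({n - 1, n + 1} : Finset ℤ),
      (Tmat φ - padj (Tmat φ)) n j * M j m = 0 := by
    intro j hj
    simp only [Finset.mem_insert, Finset.mem_singleton, not_or] at hj
    rw [A_entry, if_neg hj.2, if_neg hj.1, sub_zero, zero_mul]
  rw [pmul, tsum_eq_sum hs, Finset.sum_pair (by omega : (n:ℤ) - 1 ≠ n + 1)]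
  rw [A_entry, A_entry, if_neg (by omega : ¬ (n:ℤ) - 1 = n + 1), if_pos rfl,
    if_pos rfl, if_neg (by omega : ¬ (n:ℤ) + 1 = n - 1)]
  ring

private lemma mulA_right (φ : ℤ → ℂ) (M : PDO) (n m : ℤ) :
    pmul M (Tmat φ - padj (Tmat φ)) n m
      = M n (m - 1) * Complex.exp (-(φ (m - 1)))
        - M n (m + 1) * Complex.exp (-(φ m)) := by
  have hs : ∀ j ∉ ({m - 1, m + 1} : Finset ℤ),
      M n j * (Tmat φ - padj (Tmat φ)) j m = 0 := by
    intro j hj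
    simp only [Finset.mem_insert, Finset.mem_singleton, not_or] at hj
    rw [A_entry, if_neg (by omega), if_neg (by omega), sub_zero, mul_zero]
  rw [pmul, tsum_eq_sum hs, Finset.sum_pair (by omega : (m:ℤ) - 1 ≠ m + 1)]
  rw [A_entry, A_entry, if_pos (by omega : (m:ℤ) = (m-1) + 1), if_neg (by omega : ¬ (m:ℤ) = (m-1) - 1),
    if_neg (by omega : ¬ (m:ℤ) = (m+1) + 1), if_pos (by omega : (m:ℤ) = (m+1) - 1)]
  ring

private lemma ppow_lower (L : PDO) (hL : ∀ n m : ℤ, n + 1 < m → L n m = 0) :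
    ∀ (k : ℕ) (n m : ℤ), n + (k : ℤ) < m → ppow L k n m = 0 := by
  intro k
  induction k with
  | zero =>
    intro n m h
    simp only [ppow]
    rw [if_neg (by push_cast at h; omega)]
  | succ k ih =>
    intro n m h
    simp only [ppow, pmul]
    refine tsum_zero_of _ fun i => ?_
    by_cases hi : n + (k : ℤ) < i
    · rw [ih n i hi, zero_mul]
    · rw [hL i m (by push_cast at h ⊢; omega), mul_zero]

private lemma ppow_upper (M : PDO) (hM : ∀ n m : ℤ, m < n - 1 → M n m = 0) :
    ∀ (k : ℕ) (n m : ℤ), m < n - (k : ℤ) → ppow M k n m = 0 := by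
  intro k
  induction k with
  | zero =>
    intro n m h
    simp only [ppow]
    rw [if_neg (by push_cast at h; omega)]
  | succ k ih =>
    intro n m h
    simp only [ppow, pmul]
    refine tsum_zero_of _ fun i => ?_
    by_cases hi : i < n - (k : ℤ)
    · rw [ih n i hi, zero_mul]
    · rw [hM i m (by push_cast at h ⊢; omega), mul_zero]

end Aux
section Aux2

private lemma lb_comm (Lb : PDO) (hub : ∀ n m : ℤ, m < n - 1 → Lb n m = 0) :
    ∀ k : ℕ, pmul Lb (ppow Lb k) = ppow Lb (k + 1) := by
  intro k
  induction k with
  | zero =>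
    rw [pmul_pow_zero]
    show Lb = pmul (ppow Lb 0) Lb
    rw [pow_zero_pmul]
  | succ k ih =>
    show pmul Lb (pmul (ppow Lb k) Lb) = pmul (ppow Lb (k + 1)) Lb
    rw [← ih]
    funext n m
    exact pmul_assoc_of Lb (ppow Lb k) Lb n m
      (Finset.Icc (n - 1) (m + 1 + k)) (Finset.Icc (n - 1 - k) (m + 1))
      (by
        intro j i h1 h2 h3
        have b1 : n - 1 ≤ j := by by_contra hc; exact h1 (hub n j (by omega))
        have b2 : j - (k : ℤ) ≤ i := by
          by_contra hc; exact h2 (ppow_upper Lb hub k j i (by omega))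
        have b3 : i - 1 ≤ m := by by_contra hc; exact h3 (hub i m (by omega))
        constructor <;> rw [Finset.mem_Icc] <;> omega)

private lemma padj_ppow (Lb : PDO) (hub : ∀ n m : ℤ, m < n - 1 → Lb n m = 0) :
    ∀ (k : ℕ) (n m : ℤ), ppow (padj Lb) k n m = ppow Lb k m n := by
  intro k
  induction k with
  | zero =>
    intro n m
    simp only [ppow]
    rcases eq_or_ne n m with h | h
    · subst h; rfl
    · rw [if_neg h, if_neg (Ne.symm h)]
  | succ k ih =>
    intro n m
    show pmul (ppow (padj Lb) k) (padj Lb) n m = ppow Lb (k + 1) m n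
    rw [← lb_comm Lb hub k]
    simp only [pmul, padj]
    exact tsum_congr fun j => by rw [ih n j, mul_comm]

private lemma constraint_pow (L Lb : PDO) (φ : ℤ → ℂ)
    (hL : ∀ n m : ℤ, n + 1 < m → L n m = 0)
    (hub : ∀ n m : ℤ, m < n - 1 → Lb n m = 0)
    (hbase : pmul (Tmat φ - padj (Tmat φ)) L
      = pmul (padj Lb) (Tmat φ - padj (Tmat φ))) :
    ∀ k : ℕ, pmul (Tmat φ - padj (Tmat φ)) (ppow L k)
      = pmul (ppow (padj Lb) k) (Tmat φ - padj (Tmat φ)) := by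
  have hL' : ∀ n m : ℤ, n + 1 < m → (padj Lb) n m = 0 := fun n m h =>
    hub m n (by omega)
  intro k
  induction k with
  | zero => rw [pmul_pow_zero, pow_zero_pmul]
  | succ k ih =>
    have step1 : pmul (Tmat φ - padj (Tmat φ)) (ppow L (k + 1))
        = pmul (pmul (Tmat φ - padj (Tmat φ)) (ppow L k)) L := by
      funext n m
      exact pmul_assoc_of _ (ppow L k) L n m
        ({n - 1, n + 1}) (Finset.Icc (m - 1) (n + 1 + k))
        (by
          intro j i h1 h2 h3
          have b1 := A_support φ n j h1
          have b2 : i ≤ j + (k : ℤ) := by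
            by_contra hc; exact h2 (ppow_lower L hL k j i (by omega))
          have b3 : m ≤ i + 1 := by by_contra hc; exact h3 (hL i m (by omega))
          constructor
          · simp only [Finset.mem_insert, Finset.mem_singleton]; omega
          · rw [Finset.mem_Icc]; omega)
    have step2 : pmul (pmul (ppow (padj Lb) k) (Tmat φ - padj (Tmat φ))) L
        = pmul (ppow (padj Lb) k) (pmul (Tmat φ - padj (Tmat φ)) L) := by
      funext n m
      exact (pmul_assoc_of (ppow (padj Lb) k) _ L n m
        (Finset.Icc (m - 2) (n + k)) (Finset.Icc (m - 1) (n + 1 + k))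
        (by
          intro j i h1 h2 h3
          have b1 : j ≤ n + (k : ℤ) := by
            by_contra hc; exact h1 (ppow_lower (padj Lb) hL' k n j (by omega))
          have b2 := A_support φ j i h2
          have b3 : m ≤ i + 1 := by by_contra hc; exact h3 (hL i m (by omega))
          constructor <;> rw [Finset.mem_Icc] <;> omega)).symm
    have step3 : pmul (ppow (padj Lb) k) (pmul (padj Lb) (Tmat φ - padj (Tmat φ)))
        = pmul (pmul (ppow (padj Lb) k) (padj Lb)) (Tmat φ - padj (Tmat φ)) := by
      funext n m
      exact pmul_assoc_of (ppow (padj Lb) k) (padj Lb) _ n m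
        (Finset.Icc (m - 2) (n + k)) ({m - 1, m + 1})
        (by
          intro j i h1 h2 h3
          have b1 : j ≤ n + (k : ℤ) := by
            by_contra hc; exact h1 (ppow_lower (padj Lb) hL' k n j (by omega))
          have b2 : i ≤ j + 1 := by by_contra hc; exact h2 (hL' j i (by omega))
          have b3 := A_support φ i m h3
          constructor
          · rw [Finset.mem_Icc]; omega
          · simp only [Finset.mem_insert, Finset.mem_singleton]; omega)
    calc pmul (Tmat φ - padj (Tmat φ)) (ppow L (k + 1))
        = pmul (pmul (Tmat φ - padj (Tmat φ)) (ppow L k)) L := step1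
      _ = pmul (pmul (ppow (padj Lb) k) (Tmat φ - padj (Tmat φ))) L := by rw [ih]
      _ = pmul (ppow (padj Lb) k) (pmul (Tmat φ - padj (Tmat φ)) L) := step2
      _ = pmul (ppow (padj Lb) k) (pmul (padj Lb) (Tmat φ - padj (Tmat φ))) := by
          rw [hbase]
      _ = pmul (pmul (ppow (padj Lb) k) (padj Lb)) (Tmat φ - padj (Tmat φ)) := step3
      _ = pmul (ppow (padj Lb) (k + 1)) (Tmat φ - padj (Tmat φ)) := rfl

end Aux2
section Aux3

private lemma pdiag_mul_Tadj (φ : ℤ → ℂ) (X : PDO) (n m : ℤ) :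
    pmul (pdiag 1 X) (padj (Tmat φ)) n m
      = if m = n then X n (n + 1) * Complex.exp (-(φ n)) else 0 := by
  rw [pmul, tsum_eq_single (n + 1) (fun j hj => by
    simp only [pdiag]; rw [if_neg hj, zero_mul])]
  rcases eq_or_ne m n with h | h
  · subst h; simp [pdiag, padj, Tmat]
  · simp [pdiag, padj, Tmat, h, Ne.symm h, (by omega : ¬ (n + 1 : ℤ) = m + 1)]

private lemma Tadj_mul_pdiag (φ : ℤ → ℂ) (X : PDO) (n m : ℤ) :
    pmul (padj (Tmat φ)) (pdiag 1 X) n m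
      = if m = n then Complex.exp (-(φ (n - 1))) * X (n - 1) n else 0 := by
  rw [pmul, tsum_eq_single (n - 1) (fun j hj => by
    simp only [padj, Tmat]; rw [if_neg (by omega : ¬ n = j + 1), zero_mul])]
  simp only [padj, Tmat, pdiag, if_pos (by omega : n = n - 1 + 1)]
  rcases eq_or_ne m n with h | h
  · subst h; rw [if_pos (by omega : m = m - 1 + 1), if_pos rfl]
  · rw [if_neg (by omega : ¬ m = n - 1 + 1), if_neg h, mul_zero]

private lemma pzero_mul_T (φ : ℤ → ℂ) (X : PDO) (n m : ℤ) :
    pmul (pzero X) (Tmat φ) n m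
      = if m = n + 1 then X n n * Complex.exp (-(φ n)) else 0 := by
  rw [pmul, tsum_eq_single n (fun j hj => by
    simp only [pzero]; rw [if_neg (fun h => hj h.symm), zero_mul])]
  rcases eq_or_ne m (n + 1) with h | h
  · subst h; simp [pzero, Tmat]
  · simp [pzero, Tmat, h]

private lemma T_mul_pzero (φ : ℤ → ℂ) (X : PDO) (n m : ℤ) :
    pmul (Tmat φ) (pzero X) n m
      = if m = n + 1 then Complex.exp (-(φ n)) * X (n + 1) (n + 1) else 0 := by
  rw [pmul, tsum_eq_single (n + 1) (fun j hj => by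
    simp only [Tmat]; rw [if_neg hj, zero_mul])]
  rcases eq_or_ne m (n + 1) with h | h
  · subst h; simp [Tmat, pzero]
  · simp [Tmat, pzero, h, Ne.symm h]

end Aux3
private lemma padj_apply (M : PDO) (n m : ℤ) : padj M n m = M m n := rfl

/-- identity (4.c4a) for the positive projections under the
constraint of type B. -/
theorem typeB_positive_projection_identity
    (L Lb : PDO) (φ : ℤ → ℂ)
    (hpair : IsStandardPair L Lb)
    (hconstr : pmul (Tmat φ - padj (Tmat φ)) Lb
      = pmul (padj L) (Tmat φ - padj (Tmat φ))) :
    ∀ k : ℕ, 1 ≤ k →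
      pmul (Tmat φ - padj (Tmat φ)) (Bop L k)
        - pmul (padj (Bbarop Lb k)) (Tmat φ - padj (Tmat φ))
      = pmul (pdiag 1 (ppow (padj Lb) k)) (padj (Tmat φ))
        - pmul (padj (Tmat φ)) (pdiag 1 (ppow L k))
        + pmul (Phibarop Lb k) (Tmat φ)
        - pmul (Tmat φ) (Phiop L k) := by
  obtain ⟨hL, -, hub⟩ := hpair
  have hbase : pmul (Tmat φ - padj (Tmat φ)) L
      = pmul (padj Lb) (Tmat φ - padj (Tmat φ)) := by
    funext n m
    have hcon := congrFun (congrFun hconstr m) n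
    rw [mulA_left, mulA_right] at hcon
    rw [mulA_left, mulA_right]
    simp only [padj_apply] at hcon ⊢
    linear_combination hcon
  intro k _
  funext n m
  have hC := congrFun (congrFun (constraint_pow L Lb φ hL hub hbase k) n) m
  rw [mulA_left, mulA_right] at hC
  have hQ : ∀ a b : ℤ, ppow Lb k a b = ppow (padj Lb) k b a := fun a b =>
    (padj_ppow Lb hub k b a).symm
  simp only [Pi.sub_apply, Pi.add_apply, Bop, Bbarop, Phiop, Phibarop]
  rw [mulA_left, mulA_right, pdiag_mul_Tadj, Tadj_mul_pdiag, pzero_mul_T, T_mul_pzero]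
  simp only [padj_apply, pplus, pminus, hQ]
  have hcase : m ≤ n - 1 ∨ m = n ∨ m = n + 1 ∨ n + 2 ≤ m := by omega
  rcases hcase with h | h | h | h
  · split_ifs <;> first | (exfalso; omega) | ring
  · subst h
    split_ifs <;> first | (exfalso; omega) | ring
  · subst h
    simp only [add_sub_cancel_right] at hC ⊢
    split_ifs <;> first | (exfalso; omega) | linear_combination hC
  · split_ifs <;> first | (exfalso; omega) | linear_combination hC
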